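/- Monotonicity of the Fisher complexity: let P > Q be nonzero real numbers, γ ∈ (0, 2), α ≥ 1, and let f be a probability density function on (x_i, x_f) (with x_i > −∞), differentiable with f'(x) < 0 on (x_i, x_f). Let g = 𝔇_γ[f] be the one-parameter down transform of f, let G = 𝔈_α[g] be the differential-escort transform of g, and let h = 𝔘_γ[G] be the one-parameter up transform of G. Then, whenever all Fisher functionals involved are finite and nonzero, the Fisher complexity does not decrease: φ_{P,2−γ}[h]/φ_{Q,2−γ}[h] ≥ φ_{P,2−γ}[f]/φ_{Q,2−γ}[f]. -/

import Mathlib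

open MeasureTheory Set Filter Topology
open scoped ENNReal NNReal

noncomputable section

/-- The open interval with extended-real endpoints, viewed as a set of reals. -/
def intIoo (a b : EReal) : Set ℝ := {x : ℝ | a < (x : EReal) ∧ (x : EReal) < b}


/-- Hölder three-point interpolation for weighted integrals of powers. -/
lemma holder_three {X w : ℝ → ℝ} {S : Set ℝ}
    (hXm : AEMeasurable X (volume.restrict S)) (hwm : AEMeasurable w (volume.restrict S))
    (hXpos : ∀ᵐ x ∂(volume.restrict S), 0 < X x)
    (hwpos : ∀ᵐ x ∂(volume.restrict S), 0 < w x)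
    {a c t : ℝ} (ht0 : 0 < t) (ht1 : t < 1)
    (ha : IntegrableOn (fun x => X x ^ a * w x) S)
    (hc : IntegrableOn (fun x => X x ^ c * w x) S) :
    (∫ x in S, X x ^ (t * a + (1 - t) * c) * w x) ≤
      (∫ x in S, X x ^ a * w x) ^ t * (∫ x in S, X x ^ c * w x) ^ (1 - t) := by
  set μ := volume.restrict S with hμ
  set F₁ : ℝ → ℝ≥0∞ := fun x => ENNReal.ofReal (X x ^ a * w x) with hF₁
  set F₂ : ℝ → ℝ≥0∞ := fun x => ENNReal.ofReal (X x ^ c * w x) with hF₂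
  have hF₁m : AEMeasurable F₁ μ := ((hXm.pow aemeasurable_const).mul hwm).ennreal_ofReal
  have hF₂m : AEMeasurable F₂ μ := ((hXm.pow aemeasurable_const).mul hwm).ennreal_ofReal
  have ht1' : 0 < 1 - t := by linarith
  have hconj : (1/t).HolderConjugate (1/(1-t)) := by
    rw [Real.holderConjugate_iff]
    constructor
    · rw [lt_div_iff₀ ht0]; linarith
    · rw [one_div, one_div, inv_inv, inv_inv]; ring
  have key := ENNReal.lintegral_mul_le_Lp_mul_Lq μ hconj
      (f := fun x => (F₁ x) ^ t) (g := fun x => (F₂ x) ^ (1 - t))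
      (hF₁m.pow aemeasurable_const) (hF₂m.pow aemeasurable_const)
  have e₁ : ∀ x, ((F₁ x) ^ t) ^ (1/t : ℝ) = F₁ x := by
    intro x
    rw [← ENNReal.rpow_mul, mul_one_div, div_self ht0.ne', ENNReal.rpow_one]
  have e₂ : ∀ x, ((F₂ x) ^ (1-t)) ^ (1/(1-t) : ℝ) = F₂ x := by
    intro x
    rw [← ENNReal.rpow_mul, mul_one_div, div_self ht1'.ne', ENNReal.rpow_one]
  simp only [Pi.mul_apply, e₁, e₂, one_div_one_div] at key
  -- pointwise identification of the middle integrand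
  have hmid : ∀ᵐ x ∂μ, ENNReal.ofReal (X x ^ (t * a + (1 - t) * c) * w x)
      = (F₁ x) ^ t * (F₂ x) ^ (1 - t) := by
    filter_upwards [hXpos, hwpos] with x hx hw
    have e3 : (X x ^ a * w x) ^ t = X x ^ (a * t) * w x ^ t := by
      rw [Real.mul_rpow (Real.rpow_pos_of_pos hx a).le hw.le, ← Real.rpow_mul hx.le]
    have e4 : (X x ^ c * w x) ^ (1 - t) = X x ^ (c * (1 - t)) * w x ^ (1 - t) := by
      rw [Real.mul_rpow (Real.rpow_pos_of_pos hx c).le hw.le, ← Real.rpow_mul hx.le]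
    have e5 : X x ^ (t * a + (1 - t) * c) * w x
        = (X x ^ a * w x) ^ t * (X x ^ c * w x) ^ (1 - t) := by
      rw [e3, e4, mul_mul_mul_comm, ← Real.rpow_add hx, ← Real.rpow_add hw,
        show a * t + c * (1 - t) = t * a + (1 - t) * c by ring,
        show t + (1 - t) = (1 : ℝ) by ring, Real.rpow_one]
    rw [e5, ENNReal.ofReal_mul (Real.rpow_nonneg (by positivity) t),
      ← ENNReal.ofReal_rpow_of_nonneg (by positivity) ht0.le,
      ← ENNReal.ofReal_rpow_of_nonneg (by positivity) ht1'.le]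
  have hnn₁ : 0 ≤ᵐ[μ] fun x => X x ^ a * w x := by
    filter_upwards [hXpos, hwpos] with x hx hw; positivity
  have hnn₂ : 0 ≤ᵐ[μ] fun x => X x ^ c * w x := by
    filter_upwards [hXpos, hwpos] with x hx hw; positivity
  have hnnm : 0 ≤ᵐ[μ] fun x => X x ^ (t * a + (1 - t) * c) * w x := by
    filter_upwards [hXpos, hwpos] with x hx hw; positivity
  have hL₁ : ∫⁻ x, F₁ x ∂μ = ENNReal.ofReal (∫ x, X x ^ a * w x ∂μ) :=
    (ofReal_integral_eq_lintegral_ofReal ha hnn₁).symm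
  have hL₂ : ∫⁻ x, F₂ x ∂μ = ENNReal.ofReal (∫ x, X x ^ c * w x ∂μ) :=
    (ofReal_integral_eq_lintegral_ofReal hc hnn₂).symm
  have hRfin : (∫⁻ x, F₁ x ∂μ) ^ t * (∫⁻ x, F₂ x ∂μ) ^ (1 - t) ≠ ⊤ := by
    rw [hL₁, hL₂]
    exact ENNReal.mul_ne_top (ENNReal.rpow_ne_top_of_nonneg ht0.le ENNReal.ofReal_ne_top)
      (ENNReal.rpow_ne_top_of_nonneg ht1'.le ENNReal.ofReal_ne_top)
  have hLmid : ∫⁻ x, ENNReal.ofReal (X x ^ (t * a + (1 - t) * c) * w x) ∂μ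
      ≤ (∫⁻ x, F₁ x ∂μ) ^ t * (∫⁻ x, F₂ x ∂μ) ^ (1 - t) := by
    calc ∫⁻ x, ENNReal.ofReal (X x ^ (t * a + (1 - t) * c) * w x) ∂μ
        = ∫⁻ x, (F₁ x) ^ t * (F₂ x) ^ (1 - t) ∂μ := lintegral_congr_ae hmid
      _ ≤ _ := key
  have hmidm : AEMeasurable (fun x => X x ^ (t * a + (1 - t) * c) * w x) μ :=
    (hXm.pow aemeasurable_const).mul hwm
  have hmid_int : IntegrableOn (fun x => X x ^ (t * a + (1 - t) * c) * w x) S := by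
    refine ⟨hmidm.aestronglyMeasurable, ?_⟩
    rw [hasFiniteIntegral_iff_ofReal hnnm]
    exact lt_of_le_of_lt hLmid (lt_top_iff_ne_top.mpr hRfin)
  have hIm : ∫ x, X x ^ (t * a + (1 - t) * c) * w x ∂μ
      = (∫⁻ x, ENNReal.ofReal (X x ^ (t * a + (1 - t) * c) * w x) ∂μ).toReal := by
    rw [integral_eq_lintegral_of_nonneg_ae hnnm hmidm.aestronglyMeasurable]
  rw [hIm]
  calc (∫⁻ x, ENNReal.ofReal (X x ^ (t * a + (1 - t) * c) * w x) ∂μ).toReal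
      ≤ ((∫⁻ x, F₁ x ∂μ) ^ t * (∫⁻ x, F₂ x ∂μ) ^ (1 - t)).toReal :=
        ENNReal.toReal_mono hRfin hLmid
    _ = (∫ x, X x ^ a * w x ∂μ) ^ t * (∫ x, X x ^ c * w x ∂μ) ^ (1 - t) := by
        rw [hL₁, hL₂, ENNReal.toReal_mul, ← ENNReal.toReal_rpow, ← ENNReal.toReal_rpow,
          ENNReal.toReal_ofReal (integral_nonneg_of_ae hnn₁),
          ENNReal.toReal_ofReal (integral_nonneg_of_ae hnn₂)]


private lemma chord1 {ψ : ℝ → ℝ} {a b c : ℝ} (hab : a < b) (hbc : b < c)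
    (h : (c - a) * ψ b ≤ (c - b) * ψ a + (b - a) * ψ c) :
    (ψ b - ψ a) / (b - a) ≤ (ψ c - ψ a) / (c - a) := by
  rw [div_le_div_iff₀ (by linarith) (by linarith)]
  nlinarith

private lemma chord2 {ψ : ℝ → ℝ} {a b c : ℝ} (hab : a < b) (hbc : b < c)
    (h : (c - a) * ψ b ≤ (c - b) * ψ a + (b - a) * ψ c) :
    (ψ c - ψ a) / (c - a) ≤ (ψ c - ψ b) / (c - b) := by
  rw [div_le_div_iff₀ (by linarith) (by linarith)]
  nlinarith

private lemma chord3 {ψ : ℝ → ℝ} {a b c : ℝ} (hab : a < b) (hbc : b < c)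
    (h : (c - a) * ψ b ≤ (c - b) * ψ a + (b - a) * ψ c) :
    (ψ b - ψ a) / (b - a) ≤ (ψ c - ψ b) / (c - b) := by
  rw [div_le_div_iff₀ (by linarith) (by linarith)]
  nlinarith

lemma slope_lemma (ψ : ℝ → ℝ) (P Q α : ℝ) (hQP : Q < P) (hP : P ≠ 0) (hQ : Q ≠ 0)
    (hα : 1 < α)
    (hconv : ∀ a b c : ℝ, a ∈ ({P, Q, α * P, α * Q} : Set ℝ) →
      b ∈ ({P, Q, α * P, α * Q} : Set ℝ) → c ∈ ({P, Q, α * P, α * Q} : Set ℝ) →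
      a < b → b < c → (c - a) * ψ b ≤ (c - b) * ψ a + (b - a) * ψ c) :
    (ψ (α * Q) - ψ Q) / Q ≤ (ψ (α * P) - ψ P) / P := by
  have hα0 : (0:ℝ) < α - 1 := by linarith
  have h1α : (1 - α) ≠ 0 := by linarith
  have hα1 : (α - 1) ≠ 0 := by linarith
  have mP : P ∈ ({P, Q, α * P, α * Q} : Set ℝ) := by simp
  have mQ : Q ∈ ({P, Q, α * P, α * Q} : Set ℝ) := by simp
  have mαP : α * P ∈ ({P, Q, α * P, α * Q} : Set ℝ) := by simp
  have mαQ : α * Q ∈ ({P, Q, α * P, α * Q} : Set ℝ) := by simp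
  rcases lt_trichotomy 0 Q with hQ0 | hQ0 | hQ0
  · -- 0 < Q < P
    have hP0 : 0 < P := lt_trans hQ0 hQP
    have h1 : Q < α * Q := by nlinarith
    have h2 : α * Q < α * P := by nlinarith
    have h3 : P < α * P := by nlinarith
    have c1 := chord1 h1 h2 (hconv _ _ _ mQ mαQ mαP h1 h2)
    have c2 := chord2 hQP h3 (hconv _ _ _ mQ mP mαP hQP h3)
    have key : (ψ (α * Q) - ψ Q) / (α * Q - Q) ≤ (ψ (α * P) - ψ P) / (α * P - P) :=
      le_trans c1 c2
    have e1 : (ψ (α * Q) - ψ Q) / Q = (α - 1) * ((ψ (α * Q) - ψ Q) / (α * Q - Q)) := by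
      rw [show α * Q - Q = (α - 1) * Q by ring]
      field_simp [h1α, hα1]
    have e2 : (ψ (α * P) - ψ P) / P = (α - 1) * ((ψ (α * P) - ψ P) / (α * P - P)) := by
      rw [show α * P - P = (α - 1) * P by ring]
      field_simp [h1α, hα1]
    rw [e1, e2]
    exact mul_le_mul_of_nonneg_left key hα0.le
  · exact absurd hQ0.symm hQ
  · rcases lt_trichotomy 0 P with hP0 | hP0 | hP0
    · -- Q < 0 < P
      have h1 : α * Q < Q := by nlinarith
      have h2 : P < α * P := by nlinarith
      have c1 := chord3 h1 hQP (hconv _ _ _ mαQ mQ mP h1 hQP)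
      have c2 := chord3 hQP h2 (hconv _ _ _ mQ mP mαP hQP h2)
      have key : (ψ Q - ψ (α * Q)) / (Q - α * Q) ≤ (ψ (α * P) - ψ P) / (α * P - P) :=
        le_trans c1 c2
      have e1 : (ψ (α * Q) - ψ Q) / Q = (α - 1) * ((ψ Q - ψ (α * Q)) / (Q - α * Q)) := by
        rw [show Q - α * Q = (1 - α) * Q by ring]
        field_simp [h1α, hα1]
        ring
      have e2 : (ψ (α * P) - ψ P) / P = (α - 1) * ((ψ (α * P) - ψ P) / (α * P - P)) := by
        rw [show α * P - P = (α - 1) * P by ring]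
        field_simp [h1α, hα1]
      rw [e1, e2]
      exact mul_le_mul_of_nonneg_left key hα0.le
    · exact absurd hP0.symm hP
    · -- Q < P < 0
      have h1 : α * Q < Q := by nlinarith
      have h2 : α * P < P := by nlinarith
      have h3 : α * Q < α * P := by nlinarith
      have c1 := chord1 h1 hQP (hconv _ _ _ mαQ mQ mP h1 hQP)
      have c2 := chord2 h3 h2 (hconv _ _ _ mαQ mαP mP h3 h2)
      have key : (ψ Q - ψ (α * Q)) / (Q - α * Q) ≤ (ψ P - ψ (α * P)) / (P - α * P) :=
        le_trans c1 c2
      have e1 : (ψ (α * Q) - ψ Q) / Q = (α - 1) * ((ψ Q - ψ (α * Q)) / (Q - α * Q)) := by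
        rw [show Q - α * Q = (1 - α) * Q by ring]
        field_simp [h1α, hα1]
        ring
      have e2 : (ψ (α * P) - ψ P) / P = (α - 1) * ((ψ P - ψ (α * P)) / (P - α * P)) := by
        rw [show P - α * P = (1 - α) * P by ring]
        field_simp [h1α, hα1]
        ring
      rw [e1, e2]
      exact mul_le_mul_of_nonneg_left key hα0.le



lemma alg {γ p α Fx Dx m hd : ℝ} (hγ2 : γ < 2)
    (hF : 0 < Fx) (hD : 0 < Dx) (hm : 0 < m)
    (Hd : |hd| * (m ^ (-((1:ℝ)/(2-γ))) * (Fx ^ γ / Dx) ^ α) = m ^ ((1:ℝ)/(2-γ) - 1)) :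
    Fx ^ (1-γ) * Dx * ((Fx ^ γ / Dx) ^ (1-α) * ((m ^ (-((1:ℝ)/(2-γ))) * (Fx ^ γ / Dx) ^ α) *
      (|(m ^ ((1:ℝ)/(2-γ))) ^ ((2-γ)-2) * hd| ^ p * (m ^ ((1:ℝ)/(2-γ)))))) =
    |Fx ^ ((2 - γ) - 2) * (-Dx)| ^ (α*p) * Fx := by
  have hk0 : (0:ℝ) < 2 - γ := by linarith
  have hk : (2 - γ) ≠ 0 := hk0.ne'
  have hgz : 0 < Fx ^ γ / Dx := by positivity
  have hGW : 0 < (Fx ^ γ / Dx) ^ α := Real.rpow_pos_of_pos hgz α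
  have hm1k : (0:ℝ) < m ^ ((1:ℝ)/(2-γ)) := Real.rpow_pos_of_pos hm _
  have hmneg : (0:ℝ) < m ^ (-((1:ℝ)/(2-γ))) := Real.rpow_pos_of_pos hm _
  have hd' : |hd| = m ^ ((1:ℝ)/(2-γ) - 1) / (m ^ (-((1:ℝ)/(2-γ))) * (Fx ^ γ / Dx) ^ α) := by
    rw [eq_div_iff (by positivity)]; exact Hd
  have habs : |(m ^ ((1:ℝ)/(2-γ))) ^ ((2-γ)-2) * hd| = ((Fx ^ γ / Dx) ^ α)⁻¹ := by
    rw [abs_mul, abs_of_pos (Real.rpow_pos_of_pos hm1k _), hd', ← Real.rpow_mul hm.le,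
      mul_div_assoc', div_eq_iff (by positivity), ← Real.rpow_add hm]
    rw [show ((Fx ^ γ / Dx) ^ α)⁻¹ * (m ^ (-((1:ℝ)/(2-γ))) * (Fx ^ γ / Dx) ^ α)
        = m ^ (-((1:ℝ)/(2-γ))) * (((Fx ^ γ / Dx) ^ α)⁻¹ * (Fx ^ γ / Dx) ^ α) by ring,
      inv_mul_cancel₀ hGW.ne', mul_one]
    congr 1
    field_simp
    ring
  rw [habs, ← Real.rpow_neg hgz.le, ← Real.rpow_mul hgz.le]
  rw [abs_mul, abs_neg, abs_of_pos hD, abs_of_pos (Real.rpow_pos_of_pos hF _),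
    Real.mul_rpow (Real.rpow_pos_of_pos hF _).le hD.le, ← Real.rpow_mul hF.le]
  rw [show Fx ^ (1-γ) * Dx * ((Fx ^ γ / Dx) ^ (1-α) * ((m ^ (-((1:ℝ)/(2-γ))) * (Fx ^ γ / Dx) ^ α) *
      ((Fx ^ γ / Dx) ^ (-α * p) * (m ^ ((1:ℝ)/(2-γ))))))
    = Fx ^ (1-γ) * Dx * ((m ^ (-((1:ℝ)/(2-γ))) * m ^ ((1:ℝ)/(2-γ))) *
      ((Fx ^ γ / Dx) ^ (1-α) * (Fx ^ γ / Dx) ^ α * (Fx ^ γ / Dx) ^ (-α * p))) by ring,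
    ← Real.rpow_add hm, ← Real.rpow_add hgz, ← Real.rpow_add hgz,
    show -((1:ℝ)/(2-γ)) + (1:ℝ)/(2-γ) = 0 by ring, Real.rpow_zero, one_mul,
    show (1 - α) + α + -α * p = 1 - α * p by ring]
  rw [Real.div_rpow (by positivity) hD.le, ← Real.rpow_mul hF.le]
  rw [mul_div_assoc', div_eq_iff (Real.rpow_pos_of_pos hD _).ne']
  rw [show Fx ^ (((2-γ)-2) * (α*p)) * Dx ^ (α*p) * Fx * Dx ^ (1 - α*p)
      = (Fx ^ (((2-γ)-2) * (α*p)) * Fx ^ (1:ℝ)) * (Dx ^ (α*p) * Dx ^ (1 - α*p)) by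
        rw [Real.rpow_one]; ring,
    ← Real.rpow_add hF, ← Real.rpow_add hD,
    show Fx ^ (1-γ) * Dx * Fx ^ (γ * (1 - α*p)) = (Fx ^ (1-γ) * Fx ^ (γ * (1 - α*p))) * Dx by ring,
    ← Real.rpow_add hF,
    show (1-γ) + γ * (1 - α*p) = ((2-γ)-2) * (α*p) + 1 by ring,
    show α*p + (1 - α*p) = (1:ℝ) by ring, Real.rpow_one]

set_option maxHeartbeats 1000000 in
lemma transfer
    (γ α p : ℝ) (hγ0 : 0 < γ) (hγ2 : γ < 2)
    (xi : ℝ) (xf : EReal)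
    (f f' s g y G u h h' : ℝ → ℝ)
    (hf_nonneg : ∀ x, 0 ≤ f x)
    (hf' : ∀ x ∈ intIoo (xi : EReal) xf, HasDerivAt f (f' x) x)
    (hf'_neg : ∀ x ∈ intIoo (xi : EReal) xf, f' x < 0)
    (hs : ∀ x ∈ intIoo (xi : EReal) xf, HasDerivAt s (f x ^ (1 - γ) * |f' x|) x)
    (hs_mono : StrictMonoOn s (intIoo (xi : EReal) xf))
    (hgdef : ∀ x ∈ intIoo (xi : EReal) xf, g (s x) = f x ^ γ / |f' x|)
    (hy : ∀ z ∈ s '' intIoo (xi : EReal) xf, HasDerivAt y (g z ^ (1 - α)) z)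
    (hGdef : ∀ z ∈ s '' intIoo (xi : EReal) xf, G (y z) = g z ^ α)
    (hu : ∀ w ∈ y '' (s '' intIoo (xi : EReal) xf),
      HasDerivAt u (-(|(γ - 2) * w| ^ ((1 : ℝ) / (γ - 2)) * G w)) w)
    (hu_anti : StrictAntiOn u (y '' (s '' intIoo (xi : EReal) xf)))
    (hhdef : ∀ w ∈ y '' (s '' intIoo (xi : EReal) xf),
      h (u w) = |(γ - 2) * w| ^ ((1 : ℝ) / (2 - γ)))
    (hh' : ∀ v ∈ u '' (y '' (s '' intIoo (xi : EReal) xf)), HasDerivAt h (h' v) v) :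
    ((∫ v in u '' (y '' (s '' intIoo (xi : EReal) xf)), |h v ^ ((2 - γ) - 2) * h' v| ^ p * h v)
      = ∫ x in intIoo (xi : EReal) xf, |f x ^ ((2 - γ) - 2) * f' x| ^ (α * p) * f x)
    ∧ (IntegrableOn (fun v => |h v ^ ((2 - γ) - 2) * h' v| ^ p * h v)
        (u '' (y '' (s '' intIoo (xi : EReal) xf))) ↔
       IntegrableOn (fun x => |f x ^ ((2 - γ) - 2) * f' x| ^ (α * p) * f x)
        (intIoo (xi : EReal) xf)) := by
  set I := intIoo (xi : EReal) xf with hIdef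
  have hk0 : (0:ℝ) < 2 - γ := by linarith
  have hγ2' : γ - 2 ≠ 0 := by intro hc; linarith [sub_eq_zero.mp hc]
  -- I is open and ord-connected
  have hIopen : IsOpen I := by
    have : I = (fun x : ℝ => (x : EReal)) ⁻¹' (Set.Ioo (xi : EReal) xf) := rfl
    rw [this]; exact isOpen_Ioo.preimage continuous_coe_real_ereal
  have hImeas : MeasurableSet I := hIopen.measurableSet
  have hIord : OrdConnected I := by
    constructor
    intro a ha b hb z hz
    exact ⟨lt_of_le_of_lt' (EReal.coe_le_coe_iff.mpr hz.1) ha.1,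
      lt_of_le_of_lt (EReal.coe_le_coe_iff.mpr hz.2) hb.2⟩
  -- positivity of f and |f'| on I
  have hfpos : ∀ x ∈ I, 0 < f x := by
    intro x hx
    rcases (hf_nonneg x).lt_or_eq with hlt | heq
    · exact hlt
    · exfalso
      have hmin : IsLocalMin f x := Filter.Eventually.of_forall (fun z => heq ▸ hf_nonneg z)
      exact absurd (hmin.hasDerivAt_eq_zero (hf' x hx)) (ne_of_lt (hf'_neg x hx))
  have hDpos : ∀ x ∈ I, 0 < |f' x| := fun x hx => abs_pos.mpr (ne_of_lt (hf'_neg x hx))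
  -- S1 = s '' I
  have hscont : ContinuousOn s I := fun x hx => (hs x hx).continuousAt.continuousWithinAt
  have hS1ord : OrdConnected (s '' I) :=
    isPreconnected_iff_ordConnected.mp
      (((convex_iff_ordConnected.mpr hIord).isPreconnected).image s hscont)
  have hS1meas : MeasurableSet (s '' I) := hS1ord.measurableSet
  have hgpos : ∀ z ∈ s '' I, 0 < g z := by
    rintro z ⟨x, hx, rfl⟩
    rw [hgdef x hx]
    exact div_pos (Real.rpow_pos_of_pos (hfpos x hx) _) (hDpos x hx)
  -- y strictly monotone on S1
  have hycont : ContinuousOn y (s '' I) := fun z hz => (hy z hz).continuousAt.continuousWithinAt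
  have hy_mono : StrictMonoOn y (s '' I) := by
    apply strictMonoOn_of_deriv_pos (convex_iff_ordConnected.mpr hS1ord) hycont
    intro z hz
    rw [(hy z (interior_subset hz)).deriv]
    exact Real.rpow_pos_of_pos (hgpos z (interior_subset hz)) _
  -- S2 = y '' (s '' I)
  have hS2ord : OrdConnected (y '' (s '' I)) :=
    isPreconnected_iff_ordConnected.mp
      ((convex_iff_ordConnected.mpr hS1ord).isPreconnected.image y hycont)
  have hS2meas : MeasurableSet (y '' (s '' I)) := hS2ord.measurableSet
  have hGpos : ∀ w ∈ y '' (s '' I), 0 < G w := by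
    rintro w ⟨z, hz, rfl⟩
    rw [hGdef z hz]
    exact Real.rpow_pos_of_pos (hgpos z hz) _
  -- injectivity
  have hys_inj : InjOn (fun x => y (s x)) I :=
    ((hy_mono.comp hs_mono (fun x hx => mem_image_of_mem s hx)).injOn)
  -- the exceptional set
  set E : Set ℝ := ((y '' (s '' I)) ∩ upperBounds (y '' (s '' I))) ∪
      ((y '' (s '' I)) ∩ lowerBounds (y '' (s '' I))) ∪ {0} with hEdef
  have hEfin : E.Finite := by
    apply Set.Finite.union
    apply Set.Finite.union
    · apply Set.Subsingleton.finite
      rintro a ⟨haS, haU⟩ b ⟨hbS, hbU⟩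
      exact le_antisymm (hbU haS) (haU hbS)
    · apply Set.Subsingleton.finite
      rintro a ⟨haS, haU⟩ b ⟨hbS, hbU⟩
      exact le_antisymm (haU hbS) (hbU haS)
    · exact Set.finite_singleton 0
  have hgood : ∀ w ∈ y '' (s '' I), w ∉ E → w ∈ interior (y '' (s '' I)) ∧ w ≠ 0 := by
    intro w hw hwE
    rw [hEdef] at hwE
    simp only [Set.mem_union, Set.mem_singleton_iff, not_or] at hwE
    obtain ⟨⟨hw1, hw2⟩, hw3⟩ := hwE
    refine ⟨?_, by simpa using hw3⟩
    have hnub : w ∉ upperBounds (y '' (s '' I)) := fun hc => hw1 ⟨hw, hc⟩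
    have hnlb : w ∉ lowerBounds (y '' (s '' I)) := fun hc => hw2 ⟨hw, hc⟩
    rw [upperBounds, Set.mem_setOf_eq] at hnub
    rw [lowerBounds, Set.mem_setOf_eq] at hnlb
    push_neg at hnub hnlb
    obtain ⟨b, hbS, hbw⟩ := hnub
    obtain ⟨a, haS, haw⟩ := hnlb
    rw [mem_interior]
    exact ⟨Ioo a b, fun t ht => hS2ord.out haS hbS (Ioo_subset_Icc_self ht), isOpen_Ioo,
      ⟨haw, hbw⟩⟩
  -- the bad set in I
  set B : Set ℝ := I ∩ (fun x => y (s x)) ⁻¹' E with hBdef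
  have hBfin : B.Finite := by
    apply Set.Finite.of_finite_image (s := B) (f := fun x => y (s x))
    · apply hEfin.subset
      rintro _ ⟨x, ⟨hxI, hxE⟩, rfl⟩
      exact hxE
    · exact hys_inj.mono inter_subset_left
  have hB0 : volume.restrict I B = 0 := hBfin.measure_zero (volume.restrict I)
  -- abbreviations for the derivative functions
  set U' : ℝ → ℝ := fun w => -(|(γ - 2) * w| ^ ((1 : ℝ) / (γ - 2)) * G w) with hU'def
  set Y' : ℝ → ℝ := fun z => g z ^ (1 - α) with hY'def
  set S' : ℝ → ℝ := fun x => f x ^ (1 - γ) * |f' x| with hS'def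
  set Φ : ℝ → ℝ := fun v => |h v ^ ((2 - γ) - 2) * h' v| ^ p * h v with hΦdef
  -- the pointwise identity at good points
  have hpoint : ∀ x ∈ I, x ∉ B →
      |S' x| • (|Y' (s x)| • (|U' (y (s x))| • Φ (u (y (s x)))))
        = |f x ^ ((2 - γ) - 2) * f' x| ^ (α * p) * f x := by
    intro x hxI hxB
    have hzS1 : s x ∈ s '' I := mem_image_of_mem s hxI
    have hwS2 : y (s x) ∈ y '' (s '' I) := mem_image_of_mem y hzS1
    have hwE : y (s x) ∉ E := fun hc => hxB ⟨hxI, hc⟩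
    obtain ⟨hwint, hw0⟩ := hgood _ hwS2 hwE
    set w : ℝ := y (s x) with hwdef
    set m : ℝ := |(γ - 2) * w| with hmdef
    have hm : 0 < m := abs_pos.mpr (mul_ne_zero hγ2' hw0)
    have hFx := hfpos x hxI
    have hDx := hDpos x hxI
    have hgz := hgpos _ hzS1
    -- derivative of the model function ρ at w
    have hρ : ∃ r : ℝ, |r| = m ^ ((1:ℝ)/(2-γ) - 1) ∧
        HasDerivAt (fun w' => |(γ - 2) * w'| ^ ((1 : ℝ) / (2 - γ))) r w := by
      rcases hw0.lt_or_gt with hwneg | hwpos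
      · -- w < 0 : near w, |(γ-2)w'| = (γ-2)w'  (positive)
        have hbase : 0 < (γ - 2) * w := mul_pos_of_neg_of_neg (by linarith) hwneg
        have hmval : m = (γ - 2) * w := abs_of_pos hbase
        have inner : HasDerivAt (fun w' : ℝ => (γ - 2) * w') (γ - 2) w := by
          simpa using (hasDerivAt_id w).const_mul (γ - 2)
        have outer := Real.hasDerivAt_rpow_const
          (x := (γ - 2) * w) (p := (1:ℝ)/(2-γ)) (Or.inl hbase.ne')
        have comp := outer.comp w inner
        refine ⟨(1:ℝ)/(2-γ) * ((γ-2) * w) ^ ((1:ℝ)/(2-γ) - 1) * (γ - 2), ?_, ?_⟩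
        · rw [abs_mul, abs_mul, ← hmval,
            abs_of_pos (by positivity : (0:ℝ) < (1:ℝ)/(2-γ)),
            abs_of_pos (Real.rpow_pos_of_pos hm _), abs_of_neg (by linarith : γ - 2 < 0)]
          field_simp
          ring
        · apply comp.congr_of_eventuallyEq
          filter_upwards [Iio_mem_nhds hwneg] with t ht
          rw [abs_of_pos (mul_pos_of_neg_of_neg (by linarith) ht)]
          rfl
      · -- 0 < w : near w, |(γ-2)w'| = (2-γ)w'
        have hbase : 0 < (2 - γ) * w := mul_pos hk0 hwpos
        have hmval : m = (2 - γ) * w := by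
          rw [hmdef, show (γ - 2) * w = -((2 - γ) * w) by ring, abs_neg, abs_of_pos hbase]
        have inner : HasDerivAt (fun w' : ℝ => (2 - γ) * w') (2 - γ) w := by
          simpa using (hasDerivAt_id w).const_mul (2 - γ)
        have outer := Real.hasDerivAt_rpow_const
          (x := (2 - γ) * w) (p := (1:ℝ)/(2-γ)) (Or.inl hbase.ne')
        have comp := outer.comp w inner
        refine ⟨(1:ℝ)/(2-γ) * ((2-γ) * w) ^ ((1:ℝ)/(2-γ) - 1) * (2 - γ), ?_, ?_⟩
        · rw [abs_mul, abs_mul, ← hmval,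
            abs_of_pos (by positivity : (0:ℝ) < (1:ℝ)/(2-γ)),
            abs_of_pos (Real.rpow_pos_of_pos hm _), abs_of_pos hk0]
          field_simp
        · apply comp.congr_of_eventuallyEq
          filter_upwards [Ioi_mem_nhds hwpos] with t ht
          rw [show (γ - 2) * t = -((2 - γ) * t) by ring, abs_neg,
            abs_of_pos (mul_pos hk0 (Set.mem_Ioi.mp ht))]
          rfl
    obtain ⟨r, hrabs, hρ'⟩ := hρ
    -- chain rule and uniqueness of derivatives
    have hcomp : HasDerivAt (h ∘ u) (h' (u w) * U' w) w :=
      (hh' (u w) (mem_image_of_mem u hwS2)).comp w (hu w hwS2)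
    have hcong : h ∘ u =ᶠ[𝓝 w] (fun w' => |(γ - 2) * w'| ^ ((1 : ℝ) / (2 - γ))) := by
      filter_upwards [mem_interior_iff_mem_nhds.mp hwint] with t ht
      exact hhdef t ht
    have huniq : h' (u w) * U' w = r :=
      HasDerivAt.unique (hcomp.congr_of_eventuallyEq hcong.symm) hρ'
    have hGw : G w = (f x ^ γ / |f' x|) ^ α := by
      rw [hwdef, hGdef (s x) hzS1, hgdef x hxI]
    have hGwpos : 0 < G w := hGpos w hwS2
    have hexp : (1:ℝ)/(γ-2) = -((1:ℝ)/(2-γ)) := by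
      rw [show γ - 2 = -(2-γ) by ring, div_neg]
    have hUabs : |U' w| = m ^ (-((1:ℝ)/(2-γ))) * G w := by
      simp only [hU'def]
      rw [← hmdef, abs_neg, abs_of_pos (mul_pos (Real.rpow_pos_of_pos hm _) hGwpos), hexp]
    have Hd : |h' (u w)| * (m ^ (-((1:ℝ)/(2-γ))) * (f x ^ γ / |f' x|) ^ α)
        = m ^ ((1:ℝ)/(2-γ) - 1) := by
      rw [← hGw, ← hUabs, ← abs_mul, huniq, hrabs]
    have hhuw : h (u w) = m ^ ((1:ℝ)/(2-γ)) := by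
      rw [hhdef w hwS2, ← hmdef]
    -- now assemble
    simp only [smul_eq_mul, hΦdef, hY'def, hS'def, hU'def]
    rw [← hmdef, abs_of_pos (mul_pos (Real.rpow_pos_of_pos (hfpos x hxI) _) hDx),
      abs_of_pos (Real.rpow_pos_of_pos hgz _),
      abs_neg, abs_of_pos (mul_pos (Real.rpow_pos_of_pos hm _) hGwpos), hexp,
      hhuw, hGw, hgdef x hxI]
    conv_rhs => rw [show f' x = -|f' x| from by rw [abs_of_neg (hf'_neg x hxI)]; ring]
    exact alg hγ2 (hfpos x hxI) hDx hm Hd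
  -- a.e. identification on I
  have hBae : ∀ᵐ x ∂(volume.restrict I), x ∉ B := by
    have hset : {x : ℝ | ¬ x ∉ B} = B := by ext t; simp
    rw [ae_iff, hset]; exact hB0
  have hae : (fun x => |S' x| • (|Y' (s x)| • (|U' (y (s x))| • Φ (u (y (s x))))))
      =ᵐ[volume.restrict I] (fun x => |f x ^ ((2 - γ) - 2) * f' x| ^ (α * p) * f x) := by
    filter_upwards [ae_restrict_mem hImeas, hBae] with x hxI hxB
    exact hpoint x hxI hxB
  have hder_u : ∀ w ∈ y '' (s '' I), HasDerivWithinAt u (U' w) (y '' (s '' I)) w :=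
    fun w hw => (hu w hw).hasDerivWithinAt
  have hder_y : ∀ z ∈ s '' I, HasDerivWithinAt y (Y' z) (s '' I) z :=
    fun z hz => (hy z hz).hasDerivWithinAt
  have hder_s : ∀ x ∈ I, HasDerivWithinAt s (S' x) I x :=
    fun x hx => (hs x hx).hasDerivWithinAt
  constructor
  · calc (∫ v in u '' (y '' (s '' I)), Φ v)
        = ∫ w in y '' (s '' I), |U' w| • Φ (u w) :=
          integral_image_eq_integral_abs_deriv_smul hS2meas hder_u hu_anti.injOn Φ
      _ = ∫ z in s '' I, |Y' z| • (|U' (y z)| • Φ (u (y z))) :=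
          integral_image_eq_integral_abs_deriv_smul hS1meas hder_y hy_mono.injOn
            (fun w => |U' w| • Φ (u w))
      _ = ∫ x in I, |S' x| • (|Y' (s x)| • (|U' (y (s x))| • Φ (u (y (s x))))) :=
          integral_image_eq_integral_abs_deriv_smul hImeas hder_s hs_mono.injOn
            (fun z => |Y' z| • (|U' (y z)| • Φ (u (y z))))
      _ = ∫ x in I, |f x ^ ((2 - γ) - 2) * f' x| ^ (α * p) * f x := integral_congr_ae hae
  · rw [integrableOn_image_iff_integrableOn_abs_deriv_smul hS2meas hder_u hu_anti.injOn Φ,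
      integrableOn_image_iff_integrableOn_abs_deriv_smul hS1meas hder_y hy_mono.injOn
        (fun w => |U' w| • Φ (u w)),
      integrableOn_image_iff_integrableOn_abs_deriv_smul hImeas hder_s hs_mono.injOn
        (fun z => |Y' z| • (|U' (y z)| • Φ (u (y z))))]
    exact integrableOn_congr_fun_ae hae

/-- monotonicity of the Fisher complexity under the conjugated
transform `𝔘_γ𝔈_α𝔇_γ`:
`φ_{P,2-γ}[h]/φ_{Q,2-γ}[h] ≥ φ_{P,2-γ}[f]/φ_{Q,2-γ}[f]`. -/
theorem fisher_complexity_monotonicity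
    (P Q γ α : ℝ)
    (hPQ : Q < P) (hP : P ≠ 0) (hQ : Q ≠ 0)
    (hγ0 : 0 < γ) (hγ2 : γ < 2) (hα : 1 ≤ α)
    (xi : ℝ) (xf : EReal) (hif : (xi : EReal) < xf)
    (f f' s g y G u h h' : ℝ → ℝ)
    (hf_meas : Measurable f)
    (hf_nonneg : ∀ x, 0 ≤ f x)
    (hf_supp : ∀ x ∉ intIoo (xi : EReal) xf, f x = 0)
    (hf_int : (∫ x, f x) = 1)
    (hf' : ∀ x ∈ intIoo (xi : EReal) xf, HasDerivAt f (f' x) x)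
    (hf'_neg : ∀ x ∈ intIoo (xi : EReal) xf, f' x < 0)
    -- g = 𝔇_γ[f]
    (hs : ∀ x ∈ intIoo (xi : EReal) xf, HasDerivAt s (f x ^ (1 - γ) * |f' x|) x)
    (hs_mono : StrictMonoOn s (intIoo (xi : EReal) xf))
    (hgdef : ∀ x ∈ intIoo (xi : EReal) xf, g (s x) = f x ^ γ / |f' x|)
    (hg0 : ∀ z ∉ s '' intIoo (xi : EReal) xf, g z = 0)
    -- G = 𝔈_α[g]
    (hy : ∀ z ∈ s '' intIoo (xi : EReal) xf, HasDerivAt y (g z ^ (1 - α)) z)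
    (hGdef : ∀ z ∈ s '' intIoo (xi : EReal) xf, G (y z) = g z ^ α)
    (hG0 : ∀ w ∉ y '' (s '' intIoo (xi : EReal) xf), G w = 0)
    -- h = 𝔘_γ[G]
    (hu : ∀ w ∈ y '' (s '' intIoo (xi : EReal) xf),
      HasDerivAt u (-(|(γ - 2) * w| ^ ((1 : ℝ) / (γ - 2)) * G w)) w)
    (hu_anti : StrictAntiOn u (y '' (s '' intIoo (xi : EReal) xf)))
    (hhdef : ∀ w ∈ y '' (s '' intIoo (xi : EReal) xf),
      h (u w) = |(γ - 2) * w| ^ ((1 : ℝ) / (2 - γ)))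
    (hh0 : ∀ v ∉ u '' (y '' (s '' intIoo (xi : EReal) xf)), h v = 0)
    (hh' : ∀ v ∈ u '' (y '' (s '' intIoo (xi : EReal) xf)), HasDerivAt h (h' v) v)
    -- finiteness and nondegeneracy of the four Fisher functionals
    (hfin1 : IntegrableOn (fun x => |f x ^ ((2 - γ) - 2) * f' x| ^ P * f x)
      (intIoo (xi : EReal) xf))
    (hfin2 : IntegrableOn (fun x => |f x ^ ((2 - γ) - 2) * f' x| ^ Q * f x)
      (intIoo (xi : EReal) xf))
    (hfin3 : IntegrableOn (fun v => |h v ^ ((2 - γ) - 2) * h' v| ^ P * h v)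
      (u '' (y '' (s '' intIoo (xi : EReal) xf))))
    (hfin4 : IntegrableOn (fun v => |h v ^ ((2 - γ) - 2) * h' v| ^ Q * h v)
      (u '' (y '' (s '' intIoo (xi : EReal) xf))))
    (hne1 : (∫ x in intIoo (xi : EReal) xf, |f x ^ ((2 - γ) - 2) * f' x| ^ P * f x) ≠ 0)
    (hne2 : (∫ x in intIoo (xi : EReal) xf, |f x ^ ((2 - γ) - 2) * f' x| ^ Q * f x) ≠ 0)
    (hne3 : (∫ v in u '' (y '' (s '' intIoo (xi : EReal) xf)),
        |h v ^ ((2 - γ) - 2) * h' v| ^ P * h v) ≠ 0)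
    (hne4 : (∫ v in u '' (y '' (s '' intIoo (xi : EReal) xf)),
        |h v ^ ((2 - γ) - 2) * h' v| ^ Q * h v) ≠ 0) :
    (∫ v in u '' (y '' (s '' intIoo (xi : EReal) xf)),
        |h v ^ ((2 - γ) - 2) * h' v| ^ P * h v) ^ ((1 : ℝ) / (P * (2 - γ)))
      / (∫ v in u '' (y '' (s '' intIoo (xi : EReal) xf)),
          |h v ^ ((2 - γ) - 2) * h' v| ^ Q * h v) ^ ((1 : ℝ) / (Q * (2 - γ)))
    ≥ (∫ x in intIoo (xi : EReal) xf,
          |f x ^ ((2 - γ) - 2) * f' x| ^ P * f x) ^ ((1 : ℝ) / (P * (2 - γ)))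
      / (∫ x in intIoo (xi : EReal) xf,
          |f x ^ ((2 - γ) - 2) * f' x| ^ Q * f x) ^ ((1 : ℝ) / (Q * (2 - γ))) := by
  set I := intIoo (xi : EReal) xf with hIdef
  have hk0 : (0:ℝ) < 2 - γ := by linarith
  have hIopen : IsOpen I := by
    have : I = (fun x : ℝ => (x : EReal)) ⁻¹' (Set.Ioo (xi : EReal) xf) := rfl
    rw [this]; exact isOpen_Ioo.preimage continuous_coe_real_ereal
  have hImeas : MeasurableSet I := hIopen.measurableSet
  have hfpos : ∀ x ∈ I, 0 < f x := by
    intro x hx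
    rcases (hf_nonneg x).lt_or_eq with hlt | heq
    · exact hlt
    · exfalso
      have hmin : IsLocalMin f x := Filter.Eventually.of_forall (fun z => heq ▸ hf_nonneg z)
      exact absurd (hmin.hasDerivAt_eq_zero (hf' x hx)) (ne_of_lt (hf'_neg x hx))
  have hderiv : ∀ x ∈ I, deriv f x = f' x := fun x hx => (hf' x hx).deriv
  -- transfer of the h-side integrals to f-side ones
  have ht1 := transfer γ α P hγ0 hγ2 xi xf f f' s g y G u h h' hf_nonneg hf' hf'_neg hs hs_mono
    hgdef hy hGdef hu hu_anti hhdef hh'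
  have ht2 := transfer γ α Q hγ0 hγ2 xi xf f f' s g y G u h h' hf_nonneg hf' hf'_neg hs hs_mono
    hgdef hy hGdef hu hu_anti hhdef hh'
  rw [← hIdef] at ht1 ht2
  -- the canonical measurable integrand
  set X : ℝ → ℝ := fun x => |f x ^ ((2 - γ) - 2) * deriv f x| with hXdef
  have hXm : Measurable X := ((hf_meas.pow measurable_const).mul (measurable_deriv f)).abs
  have hXeq : ∀ x ∈ I, ∀ r : ℝ, |f x ^ ((2 - γ) - 2) * f' x| ^ r * f x = X x ^ r * f x := by
    intro x hx r
    rw [hXdef]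
    simp only [hderiv x hx]
  have hXrel : ∀ r : ℝ, (∫ x in I, |f x ^ ((2 - γ) - 2) * f' x| ^ r * f x)
      = ∫ x in I, X x ^ r * f x := by
    intro r
    exact setIntegral_congr_fun hImeas (fun x hx => hXeq x hx r)
  set F : ℝ → ℝ := fun r => ∫ x in I, X x ^ r * f x with hFdef
  have hXint : ∀ r : ℝ, IntegrableOn (fun x => |f x ^ ((2 - γ) - 2) * f' x| ^ r * f x) I →
      IntegrableOn (fun x => X x ^ r * f x) I := by
    intro r hr
    exact hr.congr_fun (fun x hx => hXeq x hx r) hImeas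
  -- integrability and positivity at the four exponents
  have hFnonneg : ∀ r : ℝ, 0 ≤ F r := by
    intro r
    apply integral_nonneg
    intro x
    exact mul_nonneg (Real.rpow_nonneg (abs_nonneg _) _) (hf_nonneg x)
  have hintP : IntegrableOn (fun x => X x ^ P * f x) I := hXint P hfin1
  have hintQ : IntegrableOn (fun x => X x ^ Q * f x) I := hXint Q hfin2
  have hintaP : IntegrableOn (fun x => X x ^ (α * P) * f x) I := hXint _ (ht1.2.mp hfin3)
  have hintaQ : IntegrableOn (fun x => X x ^ (α * Q) * f x) I := hXint _ (ht2.2.mp hfin4)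
  have hFP : 0 < F P := by
    refine (hFnonneg P).lt_of_ne' ?_
    show (∫ x in I, X x ^ P * f x) ≠ 0
    rw [← hXrel P]; exact hne1
  have hFQ : 0 < F Q := by
    refine (hFnonneg Q).lt_of_ne' ?_
    show (∫ x in I, X x ^ Q * f x) ≠ 0
    rw [← hXrel Q]; exact hne2
  have hFaP : 0 < F (α * P) := by
    refine (hFnonneg _).lt_of_ne' ?_
    show (∫ x in I, X x ^ (α * P) * f x) ≠ 0
    rw [← hXrel (α * P), ← ht1.1]; exact hne3
  have hFaQ : 0 < F (α * Q) := by
    refine (hFnonneg _).lt_of_ne' ?_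
    show (∫ x in I, X x ^ (α * Q) * f x) ≠ 0
    rw [← hXrel (α * Q), ← ht2.1]; exact hne4
  have hpts : ∀ r ∈ ({P, Q, α * P, α * Q} : Set ℝ),
      IntegrableOn (fun x => X x ^ r * f x) I ∧ 0 < F r := by
    intro r hr
    simp only [Set.mem_insert_iff, Set.mem_singleton_iff] at hr
    rcases hr with rfl | rfl | rfl | rfl
    exacts [⟨hintP, hFP⟩, ⟨hintQ, hFQ⟩, ⟨hintaP, hFaP⟩, ⟨hintaQ, hFaQ⟩]
  -- convexity of log F via Hölder
  set ψ : ℝ → ℝ := fun r => Real.log (F r) with hψdef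
  have hconv : ∀ a b c : ℝ, a ∈ ({P, Q, α * P, α * Q} : Set ℝ) →
      b ∈ ({P, Q, α * P, α * Q} : Set ℝ) → c ∈ ({P, Q, α * P, α * Q} : Set ℝ) →
      a < b → b < c → (c - a) * ψ b ≤ (c - b) * ψ a + (b - a) * ψ c := by
    intro a b c ha hb hc hab hbc
    obtain ⟨hia, hpa⟩ := hpts a ha
    obtain ⟨hib, hpb⟩ := hpts b hb
    obtain ⟨hic, hpc⟩ := hpts c hc
    have hca : 0 < c - a := by linarith
    set t : ℝ := (c - b) / (c - a) with htdef
    have ht0 : 0 < t := div_pos (by linarith) hca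
    have ht1 : t < 1 := by
      rw [htdef, div_lt_one hca]; linarith
    have hbt : b = t * a + (1 - t) * c := by
      rw [htdef]; field_simp; ring
    have hXmae : AEMeasurable X (volume.restrict I) := hXm.aemeasurable
    have hwae : AEMeasurable f (volume.restrict I) := hf_meas.aemeasurable
    have hXpos : ∀ᵐ x ∂(volume.restrict I), 0 < X x := by
      filter_upwards [ae_restrict_mem hImeas] with x hx
      rw [hXdef]
      simp only [hderiv x hx]
      exact abs_pos.mpr (mul_ne_zero (Real.rpow_pos_of_pos (hfpos x hx) _).ne'
        (ne_of_lt (hf'_neg x hx)))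
    have hwpos : ∀ᵐ x ∂(volume.restrict I), 0 < f x := by
      filter_upwards [ae_restrict_mem hImeas] with x hx
      exact hfpos x hx
    have hhold := holder_three hXmae hwae hXpos hwpos ht0 ht1 hia hic
    have hFb : F b ≤ F a ^ t * F c ^ (1 - t) := by
      rw [hFdef, hbt]
      exact hhold
    have hψb : ψ b ≤ t * ψ a + (1 - t) * ψ c := by
      rw [hψdef]
      calc Real.log (F b) ≤ Real.log (F a ^ t * F c ^ (1 - t)) :=
            Real.log_le_log hpb hFb
        _ = t * Real.log (F a) + (1 - t) * Real.log (F c) := by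
            rw [Real.log_mul (Real.rpow_pos_of_pos hpa t).ne'
              (Real.rpow_pos_of_pos hpc (1 - t)).ne',
              Real.log_rpow hpa, Real.log_rpow hpc]
    have hexpand : (c - a) * (t * ψ a + (1 - t) * ψ c) = (c - b) * ψ a + (b - a) * ψ c := by
      rw [htdef]; field_simp
      ring
    calc (c - a) * ψ b ≤ (c - a) * (t * ψ a + (1 - t) * ψ c) :=
          mul_le_mul_of_nonneg_left hψb hca.le
      _ = (c - b) * ψ a + (b - a) * ψ c := hexpand
  -- rewrite the goal in terms of F
  rw [ge_iff_le, ht1.1, ht2.1, hXrel (α * P), hXrel (α * Q), hXrel P, hXrel Q]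
  have goalpos₁ : (0:ℝ) < (∫ x in I, X x ^ P * f x) ^ ((1:ℝ)/(P * (2 - γ)))
      / (∫ x in I, X x ^ Q * f x) ^ ((1:ℝ)/(Q * (2 - γ))) := by
    apply div_pos (Real.rpow_pos_of_pos hFP _) (Real.rpow_pos_of_pos hFQ _)
  have goalpos₂ : (0:ℝ) < (∫ x in I, X x ^ (α * P) * f x) ^ ((1:ℝ)/(P * (2 - γ)))
      / (∫ x in I, X x ^ (α * Q) * f x) ^ ((1:ℝ)/(Q * (2 - γ))) := by
    apply div_pos (Real.rpow_pos_of_pos hFaP _) (Real.rpow_pos_of_pos hFaQ _)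
  rw [← Real.log_le_log_iff goalpos₁ goalpos₂,
    Real.log_div (Real.rpow_pos_of_pos hFP _).ne' (Real.rpow_pos_of_pos hFQ _).ne',
    Real.log_div (Real.rpow_pos_of_pos hFaP _).ne' (Real.rpow_pos_of_pos hFaQ _).ne',
    Real.log_rpow hFP, Real.log_rpow hFQ, Real.log_rpow hFaP, Real.log_rpow hFaQ]
  -- conclude via the slope inequality
  rcases eq_or_lt_of_le hα with hα1 | hα1
  · rw [show α * P = P by rw [← hα1]; ring, show α * Q = Q by rw [← hα1]; ring]
  · have hslope := slope_lemma ψ P Q α hPQ hP hQ hα1 hconv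
    have key := mul_le_mul_of_nonneg_right hslope (by positivity : (0:ℝ) ≤ 1/(2 - γ))
    have expP : (ψ (α * P) - ψ P) / P * (1/(2 - γ))
        = (1:ℝ)/(P * (2 - γ)) * ψ (α * P) - (1:ℝ)/(P * (2 - γ)) * ψ P := by
      field_simp
    have expQ : (ψ (α * Q) - ψ Q) / Q * (1/(2 - γ))
        = (1:ℝ)/(Q * (2 - γ)) * ψ (α * Q) - (1:ℝ)/(Q * (2 - γ)) * ψ Q := by
      field_simp
    rw [expP, expQ] at key
    have : ψ P = Real.log (F P) := rfl
    simp only [hψdef] at key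
    linarith
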